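/- Let C and D be braided (strict) monoidal categories with braidings both denoted τ, D being k-linear with k-bilinear tensor product, and let (F, F₂, F₀, γ) be a braided functor with anomaly from C to D. Then the unitalized functor F̃, with F̃₂(X,Y) := p_{X⊗Y}∘F₂(X,Y)∘(q_X⊗q_Y), is again braided: for all objects X, Y of C, F̃(τ_{X,Y})∘F̃₂(X,Y) = F̃₂(Y,X)∘(F̃(id_Y)⊗F̃(id_X))∘τ_{F̃(X),F̃(Y)}. -/

import Mathlib

open CategoryTheory MonoidalCategory

/-- If `C` and `D` are braided and `(F, F₂, F₀, γ)` is a braided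
functor with anomaly, then the unitalized functor `F̃`, with
`F̃₂(X,Y) = p_{X⊗Y} ∘ F₂(X,Y) ∘ (q_X ⊗ q_Y)`, is again braided:
`F̃(τ_{X,Y}) ∘ F̃₂(X,Y) = F̃₂(Y,X) ∘ (F̃(id_Y) ⊗ F̃(id_X)) ∘ τ_{F̃(X),F̃(Y)}`. -/
theorem stmt_13 {k : Type*} [Field k]
    {C : Type*} [Category C] [MonoidalCategory C] [BraidedCategory C]
    {D : Type*} [Category D] [Preadditive D] [Linear k D] [MonoidalCategory D]
    [BraidedCategory D] [MonoidalPreadditive D] [MonoidalLinear k D]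
    (γ : ∀ {X Y Z : C}, (X ⟶ Y) → (Y ⟶ Z) → kˣ)
    (hcocycle : ∀ {X Y Z W : C} (f : X ⟶ Y) (g : Y ⟶ Z) (h : Z ⟶ W),
      γ f (g ≫ h) * γ g h = γ (f ≫ g) h * γ f g)
    (hγmon : ∀ {X Y Z X' Y' Z' : C} (f : X ⟶ Y) (g : Y ⟶ Z)
      (f' : X' ⟶ Y') (g' : Y' ⟶ Z'),
      γ (f ⊗ₘ f') (g ⊗ₘ g') = γ f g * γ f' g')
    (Fobj : C → D) (Fmap : ∀ {X Y : C}, (X ⟶ Y) → (Fobj X ⟶ Fobj Y))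
    (hF : ∀ {X Y Z : C} (f : X ⟶ Y) (g : Y ⟶ Z),
      Fmap (f ≫ g) = (γ f g : k) • (Fmap f ≫ Fmap g))
    (F₂ : ∀ X Y : C, Fobj X ⊗ Fobj Y ⟶ Fobj (X ⊗ Y))
    (F₀ : 𝟙_ D ⟶ Fobj (𝟙_ C))
    (hF₂nat : ∀ {X X' Y Y' : C} (f : X ⟶ X') (g : Y ⟶ Y'),
      F₂ X Y ≫ Fmap (f ⊗ₘ g) = (Fmap f ⊗ₘ Fmap g) ≫ F₂ X' Y')
    (hassoc : ∀ X Y Z : C,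
      (F₂ X Y ⊗ₘ 𝟙 (Fobj Z)) ≫ F₂ (X ⊗ Y) Z ≫ Fmap (α_ X Y Z).hom =
        (α_ (Fobj X) (Fobj Y) (Fobj Z)).hom ≫ (𝟙 (Fobj X) ⊗ₘ F₂ Y Z) ≫ F₂ X (Y ⊗ Z))
    (hrunit : ∀ X : C,
      (𝟙 (Fobj X) ⊗ₘ F₀) ≫ F₂ X (𝟙_ C) ≫ Fmap (ρ_ X).hom = (ρ_ (Fobj X)).hom)
    (hlunit : ∀ X : C,
      (F₀ ⊗ₘ 𝟙 (Fobj X)) ≫ F₂ (𝟙_ C) X ≫ Fmap (λ_ X).hom = (λ_ (Fobj X)).hom)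
    (Ftobj : C → D)
    (p : ∀ X : C, Fobj X ⟶ Ftobj X) (q : ∀ X : C, Ftobj X ⟶ Fobj X)
    (hpq : ∀ X : C, q X ≫ p X = 𝟙 (Ftobj X))
    (hqp : ∀ X : C, p X ≫ q X = (γ (𝟙 X) (𝟙 X) : k) • Fmap (𝟙 X))
    (hbraided : ∀ X Y : C,
      F₂ X Y ≫ Fmap (β_ X Y).hom =
        (β_ (Fobj X) (Fobj Y)).hom ≫ (Fmap (𝟙 Y) ⊗ₘ Fmap (𝟙 X)) ≫ F₂ Y X) :
    ∀ X Y : C,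
      ((q X ⊗ₘ q Y) ≫ F₂ X Y ≫ p (X ⊗ Y)) ≫
          (q (X ⊗ Y) ≫ Fmap (β_ X Y).hom ≫ p (Y ⊗ X)) =
        (β_ (Ftobj X) (Ftobj Y)).hom ≫
          ((q Y ≫ Fmap (𝟙 Y) ≫ p Y) ⊗ₘ (q X ≫ Fmap (𝟙 X) ≫ p X)) ≫
          ((q Y ⊗ₘ q X) ≫ F₂ Y X ≫ p (Y ⊗ X)) := by

  intro X Y
  have hee : ∀ Z : C, Fmap (𝟙 Z) ≫ ((γ (𝟙 Z) (𝟙 Z) : k) • Fmap (𝟙 Z)) = Fmap (𝟙 Z) := by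
    intro Z
    rw [Linear.comp_smul, ← hF]
    simp
  have hγβ : γ (𝟙 (X ⊗ Y)) (β_ X Y).hom = γ (𝟙 (X ⊗ Y)) (𝟙 (X ⊗ Y)) := by
    have h := hcocycle (𝟙 (X ⊗ Y)) (𝟙 (X ⊗ Y)) (β_ X Y).hom
    simp only [Category.id_comp, Category.comp_id] at h
    exact mul_left_cancel h
  have hqpβ : p (X ⊗ Y) ≫ q (X ⊗ Y) ≫ Fmap (β_ X Y).hom = Fmap (β_ X Y).hom := by
    rw [← Category.assoc, hqp, Linear.smul_comp, ← hγβ, ← hF, Category.id_comp]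
  have hqe : ∀ Z : C, q Z ≫ Fmap (𝟙 Z) ≫ p Z ≫ q Z = q Z ≫ Fmap (𝟙 Z) := by
    intro Z
    rw [hqp, hee]
  calc ((q X ⊗ₘ q Y) ≫ F₂ X Y ≫ p (X ⊗ Y)) ≫
          (q (X ⊗ Y) ≫ Fmap (β_ X Y).hom ≫ p (Y ⊗ X))
      = (q X ⊗ₘ q Y) ≫ F₂ X Y ≫
          (p (X ⊗ Y) ≫ q (X ⊗ Y) ≫ Fmap (β_ X Y).hom) ≫ p (Y ⊗ X) := by
        simp only [Category.assoc]
    _ = (q X ⊗ₘ q Y) ≫ (F₂ X Y ≫ Fmap (β_ X Y).hom) ≫ p (Y ⊗ X) := by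
        rw [hqpβ]; simp only [Category.assoc]
    _ = (q X ⊗ₘ q Y) ≫ (β_ (Fobj X) (Fobj Y)).hom ≫
          (Fmap (𝟙 Y) ⊗ₘ Fmap (𝟙 X)) ≫ F₂ Y X ≫ p (Y ⊗ X) := by
        rw [hbraided]; simp only [Category.assoc]
    _ = (β_ (Ftobj X) (Ftobj Y)).hom ≫ (q Y ⊗ₘ q X) ≫
          (Fmap (𝟙 Y) ⊗ₘ Fmap (𝟙 X)) ≫ F₂ Y X ≫ p (Y ⊗ X) := by
        rw [← Category.assoc, ← Category.assoc,
          BraidedCategory.braiding_naturality]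
        simp only [Category.assoc]
    _ = (β_ (Ftobj X) (Ftobj Y)).hom ≫
          ((q Y ≫ Fmap (𝟙 Y)) ⊗ₘ (q X ≫ Fmap (𝟙 X))) ≫ F₂ Y X ≫ p (Y ⊗ X) := by
        rw [tensorHom_comp_tensorHom_assoc]
    _ = (β_ (Ftobj X) (Ftobj Y)).hom ≫
          ((q Y ≫ Fmap (𝟙 Y) ≫ p Y ≫ q Y) ⊗ₘ (q X ≫ Fmap (𝟙 X) ≫ p X ≫ q X)) ≫
          F₂ Y X ≫ p (Y ⊗ X) := by
        rw [hqe, hqe]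
    _ = (β_ (Ftobj X) (Ftobj Y)).hom ≫
          ((q Y ≫ Fmap (𝟙 Y) ≫ p Y) ⊗ₘ (q X ≫ Fmap (𝟙 X) ≫ p X)) ≫
          ((q Y ⊗ₘ q X) ≫ F₂ Y X ≫ p (Y ⊗ X)) := by
        rw [tensorHom_comp_tensorHom_assoc]
        simp only [Category.assoc]
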